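/- Fix n ≥ k ≥ 1 and a vector space of formal solutions: if (u_i)_{i=0}^{q} with q = ⌈(n+k)/2⌉ satisfies u_i = 0 for i < q−k and ∑_{i=α}^q (−1)^i C(i,α) u_i = 0 for all α = 0,...,k−1, then u_i = C(k, q−i) · u_q for all i. -/

import Mathlib

open Polynomial Finset

/-- Uniqueness of solutions: if `q = ⌈(n+k)/2⌉`, `u_i = 0` for `i < q−k`, and
`∑_{i=α}^q (−1)^i C(i,α) u_i = 0` for `α = 0,…,k−1`, then `u_i = C(k,q−i)·u_q` for all `i ≤ q`. -/
theorem stmt9 (n k : ℕ) (hk1 : 1 ≤ k) (hkn : k ≤ n) (u : ℕ → ℚ)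
    (hu0 : ∀ i < (n + k + 1) / 2 - k, u i = 0)
    (hlin : ∀ α < k, ∑ i ∈ Finset.range ((n + k + 1) / 2 + 1),
      (-1 : ℚ) ^ i * (i.choose α) * u i = 0) :
    ∀ i ≤ (n + k + 1) / 2,
      u i = (k.choose ((n + k + 1) / 2 - i)) * u ((n + k + 1) / 2) := by
  set q : ℕ := (n + k + 1) / 2 with hq
  have hkq : k ≤ q := by omega
  set f : ℚ[X] := ∑ j ∈ range (q + 1), C (u j) * X ^ j with hf
  -- Step 1: (X+1)^k divides f
  have hdvd : (X + 1 : ℚ[X]) ^ k ∣ f := by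
    by_cases hf0 : f = 0
    · simp [hf0]
    have hroots : ∀ m ≤ k - 1, (Polynomial.derivative^[m] f).IsRoot (-1) := by
      intro m hm
      have hmk : m < k := by omega
      have hL := hlin m hmk
      show (Polynomial.derivative^[m] f).eval (-1) = 0
      rw [hf, iterate_derivative_sum]
      simp only [iterate_derivative_C_mul, iterate_derivative_X_pow_eq_C_mul]
      rw [eval_finset_sum]
      simp only [eval_mul, eval_C, eval_pow, eval_X]
      have hcongr : ∀ j ∈ range (q + 1),
          u j * ((Nat.descFactorial j m : ℚ) * (-1 : ℚ) ^ (j - m))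
            = (m.factorial : ℚ) * (-1 : ℚ) ^ m * ((-1 : ℚ) ^ j * (j.choose m) * u j) := by
        intro j _
        rcases lt_or_ge j m with h | h
        · simp [Nat.choose_eq_zero_of_lt h, Nat.descFactorial_eq_zero_iff_lt.mpr h]
        · have h1 : (Nat.descFactorial j m : ℚ) = (m.factorial : ℚ) * (j.choose m) := by
            rw [Nat.descFactorial_eq_factorial_mul_choose]; push_cast; ring
          have h2 : ((-1 : ℚ)) ^ (j - m) = (-1 : ℚ) ^ j * (-1 : ℚ) ^ m := by
            rw [← pow_add, show j + m = (j - m) + 2 * m by omega, pow_add, pow_mul]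
            norm_num
          rw [h1, h2]; ring
      rw [Finset.sum_congr rfl hcongr, ← Finset.mul_sum, hL, mul_zero]
    have hlt : k - 1 < f.rootMultiplicity (-1) := by
      rw [lt_rootMultiplicity_iff_isRoot_iterate_derivative_of_mem_nonZeroDivisors hf0
        (mem_nonZeroDivisors_of_ne_zero (by exact_mod_cast (Nat.factorial_pos (k-1)).ne'))]
      exact hroots
    have hk' : k ≤ f.rootMultiplicity (-1) := by omega
    have h := (Polynomial.le_rootMultiplicity_iff hf0).mp hk'
    simpa using h
  -- Step 2: f = X^(q-k) * g
  set g : ℚ[X] := ∑ m ∈ range (k + 1), C (u (q - k + m)) * X ^ m with hg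
  have hfg : f = X ^ (q - k) * g := by
    rw [hf, hg, Finset.mul_sum]
    have h1 : ∑ j ∈ range (q + 1), C (u j) * X ^ j
        = ∑ j ∈ Ico (q - k) (q + 1), C (u j) * (X : ℚ[X]) ^ j := by
      rw [Finset.range_eq_Ico, ← Finset.sum_Ico_consecutive _ (Nat.zero_le (q - k)) (by omega)]
      have : ∑ j ∈ Ico 0 (q - k), C (u j) * (X : ℚ[X]) ^ j = 0 := by
        apply Finset.sum_eq_zero
        intro j hj
        rw [Finset.mem_Ico] at hj
        rw [hu0 j hj.2, map_zero, zero_mul]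
      rw [this, zero_add]
    rw [h1, Finset.sum_Ico_eq_sum_range]
    have h2 : q + 1 - (q - k) = k + 1 := by omega
    rw [h2]
    apply Finset.sum_congr rfl
    intro m _
    rw [pow_add]
    ring
  -- Step 3: (X+1)^k divides g
  have hcop : IsCoprime ((X : ℚ[X]) + 1) X := ⟨1, -1, by ring⟩
  have hdvdg : (X + 1 : ℚ[X]) ^ k ∣ g :=
    (hcop.pow (m := k) (n := q - k)).dvd_of_dvd_mul_left (hfg ▸ hdvd)
  obtain ⟨h, hgh⟩ := hdvdg
  -- Step 4: h is a constant
  have hdegg : g.natDegree ≤ k := by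
    rw [hg]
    refine natDegree_sum_le_of_forall_le _ _ ?_
    intro m hm
    refine (natDegree_C_mul_le _ _).trans ?_
    rw [natDegree_X_pow]
    exact Nat.lt_succ_iff.mp (Finset.mem_range.mp hm)
  have hmon : ((X : ℚ[X]) + 1).Monic := by simpa using monic_X_add_C (1 : ℚ)
  have hXk : ((X : ℚ[X]) + 1) ^ k ≠ 0 := pow_ne_zero _ hmon.ne_zero
  have hd1 : ((X : ℚ[X]) + 1).natDegree = 1 := by simpa using natDegree_X_add_C (1 : ℚ)
  have hhC : h = C (h.coeff 0) := by
    by_cases h0 : h = 0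
    · rw [h0]; simp
    have : g.natDegree = k + h.natDegree := by
      rw [hgh, natDegree_mul hXk h0, natDegree_pow, hd1, mul_one]
    have : h.natDegree = 0 := by omega
    exact (eq_C_of_natDegree_eq_zero this)
  set c : ℚ := h.coeff 0 with hc
  -- Step 5: coefficients of g
  have hgcoeff : ∀ m, m ≤ k → u (q - k + m) = (k.choose m : ℚ) * c := by
    intro m hm
    have e1 : g.coeff m = u (q - k + m) := by
      rw [hg, finset_sum_coeff]
      simp only [coeff_C_mul, coeff_X_pow, mul_ite, mul_one, mul_zero]
      rw [Finset.sum_eq_single m]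
      · simp
      · intro b _ hb; simp [if_neg (Ne.symm hb)]
      · intro hmem; exact absurd (Finset.mem_range.mpr (Nat.lt_succ_of_le hm)) hmem
    have e2 : g.coeff m = (k.choose m : ℚ) * c := by
      rw [hgh, hhC, coeff_mul_C, coeff_X_add_one_pow]
    rw [← e1, e2]
  have hcq : c = u q := by
    have := hgcoeff k le_rfl
    rw [show q - k + k = q by omega, Nat.choose_self] at this
    simpa using this.symm
  intro i hi
  rcases lt_or_ge i (q - k) with hlow | hhigh
  · rw [hu0 i hlow, Nat.choose_eq_zero_of_lt (show k < q - i by omega)]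
    simp
  · have hm : i - (q - k) ≤ k := by omega
    have hui := hgcoeff (i - (q - k)) hm
    rw [show q - k + (i - (q - k)) = i by omega] at hui
    rw [hui, hcq, show q - i = k - (i - (q - k)) by omega, Nat.choose_symm hm]
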